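/- Let Θ be the reflection through sites in a plane orthogonal to e_i, and let f, g be bounded measurable functions of the spins that depend only on the spins (φ_x)_{x ∈ T_L^+}. Then: (1) ⟨f · Θg⟩_{L,N,β} = ⟨g · Θf⟩_{L,N,β}; (2) ⟨f · Θf⟩_{L,N,β} ≥ 0; and consequently (3) ⟨f · Θg⟩_{L,N,β} ≤ ⟨f · Θf⟩_{L,N,β}^{1/2} · ⟨g · Θg⟩_{L,N,β}^{1/2}. -/

import Mathlib

open MeasureTheory Metric
open scoped RealInnerProductSpace BigOperators

/-- Vertices of the torus `(ℤ/Lℤ)^d`. -/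
abbrev TorusPt (d L : ℕ) := Fin d → ZMod L

/-- Nearest-neighbour adjacency on the torus: `x` and `y` differ by `±1 (mod L)`
in exactly one coordinate. -/
def torusAdj {d L : ℕ} (x y : TorusPt d L) : Prop :=
  ∃ j : Fin d, y = Function.update x j (x j + 1) ∨ y = Function.update x j (x j - 1)

instance {d L : ℕ} (x y : TorusPt d L) : Decidable (torusAdj x y) := by
  unfold torusAdj; infer_instance

/-- The unit sphere `S^{N-1} ⊂ ℝ^N`. -/
abbrev SpinSphere (N : ℕ) := sphere (0 : EuclideanSpace ℝ (Fin N)) 1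

/-- A spin configuration on the torus. -/
abbrev SpinCfg (d L N : ℕ) := TorusPt d L → SpinSphere N

/-- The uniform probability measure on the unit sphere `S^{N-1}`. -/
noncomputable def sphereUniform (N : ℕ) : Measure (SpinSphere N) :=
  ((volume : Measure (EuclideanSpace ℝ (Fin N))).toSphere Set.univ)⁻¹ •
    (volume : Measure (EuclideanSpace ℝ (Fin N))).toSphere

/-- The product over vertices of the uniform probability measures on the sphere. -/
noncomputable def spinMeasure (d L N : ℕ) [NeZero L] : Measure (SpinCfg d L N) :=
  Measure.pi fun _ : TorusPt d L => sphereUniform N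

/-- The Hamiltonian `H(φ) = -∑_{{x,y} edge} φ_x · φ_y`; every unordered
nearest-neighbour edge appears exactly twice in the double sum below. -/
noncomputable def hamiltonian {d L N : ℕ} [NeZero L] (φ : SpinCfg d L N) : ℝ :=
  -(1 / 2) * ∑ x : TorusPt d L, ∑ y : TorusPt d L,
    if torusAdj x y then
      ⟪(φ x : EuclideanSpace ℝ (Fin N)), (φ y : EuclideanSpace ℝ (Fin N))⟫
    else 0

/-- The Gibbs expectation `⟨f⟩_{L,N,β}`. -/
noncomputable def gibbsExp (d L N : ℕ) [NeZero L] (β : ℝ) (f : SpinCfg d L N → ℝ) : ℝ :=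
  (∫ φ, Real.exp (-β * hamiltonian φ) ∂(spinMeasure d L N))⁻¹ *
    ∫ φ, f φ * Real.exp (-β * hamiltonian φ) ∂(spinMeasure d L N)

/-- The spin-spin correlation `⟨φ_x ⬝ φ_y⟩_{L,N,β}`. -/
noncomputable def corrDot (d L N : ℕ) [NeZero L] (β : ℝ) (x y : TorusPt d L) : ℝ :=
  gibbsExp d L N β fun φ =>
    ⟪(φ x : EuclideanSpace ℝ (Fin N)), (φ y : EuclideanSpace ℝ (Fin N))⟫

/-- The correlation `⟨φ_x^1 φ_y^1⟩_{L,N,β}` of first components. -/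
noncomputable def corrOne (d L N : ℕ) [NeZero L] [NeZero N] (β : ℝ) (x y : TorusPt d L) : ℝ :=
  gibbsExp d L N β fun φ =>
    (φ x : EuclideanSpace ℝ (Fin N)) 0 * (φ y : EuclideanSpace ℝ (Fin N)) 0

/-- The origin of the torus. -/
def torusOrigin (d L : ℕ) : TorusPt d L := fun _ => 0

/-- The point `n • e_i` on the `i`-th cartesian axis. -/
def axisPt (d L : ℕ) (i : Fin d) (n : ℕ) : TorusPt d L :=
  fun k => if k = i then (n : ZMod L) else 0

/-- The sup torus norm `‖z‖_∞ = max_i min(z_i, L - z_i)`. -/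
def tnormInf {d L : ℕ} (z : TorusPt d L) : ℕ :=
  Finset.univ.sup fun i : Fin d => min (z i).val (L - (z i).val)

/-- Reflection of torus sites through the plane of sites `{x : x_i = m}`:
`Θ(x)_i = 2m - x_i (mod L)` and the other coordinates are unchanged. -/
def reflSite {d L : ℕ} (i : Fin d) (m : ℕ) (x : TorusPt d L) : TorusPt d L :=
  Function.update x i (2 * (m : ZMod L) - x i)

/-- Membership in the half-torus `T_L^+ = {x : x_i - m (mod L) ∈ {0,…,L/2}}`. -/
def inPlusSite {d L : ℕ} (i : Fin d) (m : ℕ) (x : TorusPt d L) : Prop :=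
  (x i - (m : ZMod L)).val ≤ L / 2

/-- Membership in the other half-torus `T_L^- = Θ(T_L^+)`. -/
def inMinusSite {d L : ℕ} (i : Fin d) (m : ℕ) (x : TorusPt d L) : Prop :=
  inPlusSite i m (reflSite i m x)

/-- Membership in the fixed-point set `T_L^R = {x : x_i = m or x_i = m + L/2 (mod L)}`. -/
def inFixedSite {d L : ℕ} (i : Fin d) (m : ℕ) (x : TorusPt d L) : Prop :=
  (x i - (m : ZMod L)).val = 0 ∨ (x i - (m : ZMod L)).val = L / 2

instance {d L : ℕ} (i : Fin d) (m : ℕ) : DecidablePred (inPlusSite (d := d) (L := L) i m) :=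
  fun x => by unfold inPlusSite; infer_instance

instance {d L : ℕ} (i : Fin d) (m : ℕ) : DecidablePred (inMinusSite (d := d) (L := L) i m) :=
  fun x => by unfold inMinusSite inPlusSite; infer_instance

instance {d L : ℕ} (i : Fin d) (m : ℕ) : DecidablePred (inFixedSite (d := d) (L := L) i m) :=
  fun x => by unfold inFixedSite; infer_instance

/-- Reflection through sites acting on spin configurations: `(Θφ)_x = φ_{Θ(x)}`. -/
def reflSiteCfg {d L N : ℕ} (i : Fin d) (m : ℕ) (φ : SpinCfg d L N) : SpinCfg d L N :=
  fun x => φ (reflSite i m x)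

/-- The set `H_L` of vertices with all coordinates nonzero, together with the
nonzero points of the cartesian axes. -/
def inHL {d L : ℕ} (x : TorusPt d L) : Prop :=
  (∀ j, x j ≠ 0) ∨ ∃ i, x i ≠ 0 ∧ ∀ j, j ≠ i → x j = 0

/-- `ẑ_i = min(z_i, L - z_i)`, the torus distance of the `i`-th coordinate from `0`. -/
def hatCoord {d L : ℕ} (z : TorusPt d L) (i : Fin d) : ℕ :=
  min (z i).val (L - (z i).val)

/-- The box `Q_z = {x : ∀ i, x_i ≤ ẑ_i or x_i > L - ẑ_i}` with corner `z`. -/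
def inBoxQ {d L : ℕ} (z x : TorusPt d L) : Prop :=
  ∀ i, (x i).val ≤ hatCoord z i ∨ L - hatCoord z i < (x i).val

set_option linter.unusedSectionVars false
section Basic
variable {d L N : ℕ} [NeZero L] (i : Fin d) (m : ℕ)

lemma reflSite_apply_self (x : TorusPt d L) : reflSite i m x i = 2 * (m : ZMod L) - x i := by
  simp [reflSite]

lemma reflSite_apply_ne (x : TorusPt d L) {k : Fin d} (hk : k ≠ i) : reflSite i m x k = x k := by
  simp [reflSite, Function.update_apply, hk]

lemma reflSite_reflSite (x : TorusPt d L) : reflSite i m (reflSite i m x) = x := by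
  funext k
  by_cases hk : k = i
  · subst hk; simp [reflSite]
  · simp [reflSite, Function.update_apply, hk]

/-- Reflection as an equiv of the torus. -/
def reflEquiv : TorusPt d L ≃ TorusPt d L where
  toFun := reflSite i m
  invFun := reflSite i m
  left_inv := reflSite_reflSite i m
  right_inv := reflSite_reflSite i m

lemma torusAdj_reflSite_of {x y : TorusPt d L} (h : torusAdj x y) :
    torusAdj (reflSite i m x) (reflSite i m y) := by
  obtain ⟨j, hj | hj⟩ := h
  · by_cases hji : j = i
    · subst hji
      refine ⟨j, Or.inr ?_⟩
      subst hj
      funext k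
      by_cases hk : k = j
      · subst hk; simp [reflSite]; ring
      · simp [reflSite, Function.update_apply, hk]
    · refine ⟨j, Or.inl ?_⟩
      subst hj
      funext k
      rcases eq_or_ne k i with rfl | hk
      · have : ¬ (k = j) := fun h => hji h.symm
        simp [reflSite, Function.update_apply, this]
      · by_cases hkj : k = j
        · subst hkj; simp [reflSite, Function.update_apply, hk, hji]
        · simp [reflSite, Function.update_apply, hk, hkj]
  · by_cases hji : j = i
    · subst hji
      refine ⟨j, Or.inl ?_⟩
      subst hj
      funext k
      by_cases hk : k = j
      · subst hk; simp [reflSite]; ring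
      · simp [reflSite, Function.update_apply, hk]
    · refine ⟨j, Or.inr ?_⟩
      subst hj
      funext k
      rcases eq_or_ne k i with rfl | hk
      · have : ¬ (k = j) := fun h => hji h.symm
        simp [reflSite, Function.update_apply, this]
      · by_cases hkj : k = j
        · subst hkj; simp [reflSite, Function.update_apply, hk, hji]
        · simp [reflSite, Function.update_apply, hk, hkj]

lemma torusAdj_reflSite_iff {x y : TorusPt d L} :
    torusAdj (reflSite i m x) (reflSite i m y) ↔ torusAdj x y := by
  constructor
  · intro h
    have := torusAdj_reflSite_of i m h
    simpa [reflSite_reflSite] using this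
  · exact torusAdj_reflSite_of i m

end Basic
section Arith
variable {d L N : ℕ} [NeZero L] (i : Fin d) (m : ℕ) (hL : Even L)

lemma two_le_L (hL : Even L) : 2 ≤ L := by
  have h0 : L ≠ 0 := NeZero.ne L
  rcases hL with ⟨l, rfl⟩
  omega

lemma half_add_half (hL : Even L) : L / 2 + L / 2 = L := by
  rcases hL with ⟨l, rfl⟩; omega

lemma inPlus_reflSite_val (x : TorusPt d L) :
    ((reflSite i m x i) - (m : ZMod L)) = -(x i - (m : ZMod L)) := by
  rw [reflSite_apply_self]; ring

/-- If `x` is not in the plus half, then its reflection is in the plus half. -/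
lemma inPlus_of_not_inPlus (hL : Even L) {x : TorusPt d L} (hx : ¬ inPlusSite i m x) :
    inPlusSite i m (reflSite i m x) := by
  unfold inPlusSite at *
  rw [inPlus_reflSite_val]
  set w := x i - (m : ZMod L) with hw
  have hv : w.val < L := ZMod.val_lt w
  have hx' : L / 2 < w.val := lt_of_not_ge hx
  have hne : w ≠ 0 := by
    intro h0
    rw [h0] at hx'
    simp [ZMod.val_zero] at hx'
  rw [ZMod.neg_val, if_neg hne]
  have := half_add_half hL
  omega

/-- If `x` and its reflection are both in the plus half, then `x` is a fixed point. -/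
lemma reflSite_eq_self (hL : Even L) {x : TorusPt d L} (hx : inPlusSite i m x)
    (hx' : inPlusSite i m (reflSite i m x)) : reflSite i m x = x := by
  unfold inPlusSite at *
  rw [inPlus_reflSite_val] at hx'
  set w := x i - (m : ZMod L) with hw
  have h2w : 2 * w = 0 := by
    by_cases hne : w = 0
    · rw [hne]; ring
    · rw [ZMod.neg_val, if_neg hne] at hx'
      have hv : w.val < L := ZMod.val_lt w
      have hhalf := half_add_half hL
      have hveq : w.val = L / 2 := by omega
      have hcast : ((w.val : ℕ) : ZMod L) = w := ZMod.natCast_rightInverse w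
      have h2 : 2 * w = ((2 * w.val : ℕ) : ZMod L) := by push_cast [hcast]; ring
      rw [h2, hveq]
      have hLL : 2 * (L / 2) = L := by omega
      rw [hLL, ZMod.natCast_self]
  funext k
  by_cases hk : k = i
  · subst hk
    rw [reflSite_apply_self]
    have : 2 * (m : ZMod L) - x k - x k = -(2 * w) := by rw [hw]; ring
    have h0 : 2 * (m : ZMod L) - x k - x k = 0 := by rw [this, h2w]; ring
    linear_combination h0
  · exact reflSite_apply_ne i m x hk

end Arith
section AdjSplit
variable {d L N : ℕ} [NeZero L] (i : Fin d) (m : ℕ)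

lemma torusAdj_symm {x y : TorusPt d L} (h : torusAdj x y) : torusAdj y x := by
  obtain ⟨j, hj | hj⟩ := h
  · refine ⟨j, Or.inr ?_⟩
    subst hj
    funext k
    by_cases hk : k = j
    · subst hk; simp [Function.update_apply]
    · simp [Function.update_apply, hk]
  · refine ⟨j, Or.inl ?_⟩
    subst hj
    funext k
    by_cases hk : k = j
    · subst hk; simp [Function.update_apply]
    · simp [Function.update_apply, hk]

/-- Crossing lemma: if `x ∉ T⁺` is adjacent to `y ∈ T⁺`, then `Θy ∈ T⁺` (i.e. `y ∈ T⁻`). -/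
lemma inPlus_reflSite_of_adj (hL : Even L) {x y : TorusPt d L} (hadj : torusAdj x y)
    (hx : ¬ inPlusSite i m x) (hy : inPlusSite i m y) :
    inPlusSite i m (reflSite i m y) := by
  have hL2 : 2 ≤ L := two_le_L hL
  haveI : Fact (1 < L) := ⟨hL2⟩
  have hhalf := half_add_half (L := L) hL
  unfold inPlusSite at *
  rw [inPlus_reflSite_val]
  set c : ZMod L := (m : ZMod L) with hc
  set wx := x i - c with hwx
  set wy := y i - c with hwy
  have hvx : wx.val < L := ZMod.val_lt wx
  have hvy : wy.val < L := ZMod.val_lt wy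
  have hx' : L / 2 < wx.val := lt_of_not_ge hx
  obtain ⟨j, hj | hj⟩ := hadj
  · by_cases hji : j = i
    · have hyi : y i = x i + 1 := by rw [hj, hji]; simp
      have hwyx : wy = wx + 1 := by rw [hwy, hwx, hyi]; ring
      by_cases h0 : wy = 0
      · rw [ZMod.neg_val, if_pos h0]; omega
      · exfalso
        have hval : wy.val = (wx.val + 1) % L := by
          rw [hwyx, ZMod.val_add, ZMod.val_one]
        have hne : wx.val + 1 ≠ L := by
          intro hEq
          have : wy.val = 0 := by rw [hval, hEq, Nat.mod_self]
          exact h0 ((ZMod.val_eq_zero wy).mp this)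
        have : wy.val = wx.val + 1 := by
          rw [hval, Nat.mod_eq_of_lt (by omega)]
        omega
    · exfalso
      have hyi : y i = x i := by
        rw [hj, Function.update_apply, if_neg (fun h => hji h.symm)]
      have : wy = wx := by rw [hwy, hwx, hyi]
      rw [this] at hy
      omega
  · by_cases hji : j = i
    · have hyi : y i = x i - 1 := by rw [hj, hji]; simp
      have hwxy : wx = wy + 1 := by rw [hwy, hwx, hyi]; ring
      have hvaly : wx.val = (wy.val + 1) % L := by
        rw [hwxy, ZMod.val_add, ZMod.val_one]
      have hne : wy.val + 1 ≠ L := by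
        intro hEq
        have : wx.val = 0 := by rw [hvaly, hEq, Nat.mod_self]
        omega
      have hxy : wx.val = wy.val + 1 := by
        rw [hvaly, Nat.mod_eq_of_lt (by omega)]
      have h0 : wy ≠ 0 := by
        intro h0
        have : wy.val = 0 := by rw [h0, ZMod.val_zero]
        omega
      rw [ZMod.neg_val, if_neg h0]
      omega
    · exfalso
      have hyi : y i = x i := by
        rw [hj, Function.update_apply, if_neg (fun h => hji h.symm)]
      have : wy = wx := by rw [hwy, hwx, hyi]
      rw [this] at hy
      omega

/-- Every nearest-neighbour edge lies entirely in `T⁺` or entirely in `T⁻`. -/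
lemma adj_split (hL : Even L) {x y : TorusPt d L} (hadj : torusAdj x y) :
    (inPlusSite i m x ∧ inPlusSite i m y) ∨
      (inPlusSite i m (reflSite i m x) ∧ inPlusSite i m (reflSite i m y)) := by
  by_cases hx : inPlusSite i m x
  · by_cases hy : inPlusSite i m y
    · exact Or.inl ⟨hx, hy⟩
    · exact Or.inr ⟨inPlus_reflSite_of_adj i m hL (torusAdj_symm hadj) hy hx,
        inPlus_of_not_inPlus i m hL hy⟩
  · refine Or.inr ⟨inPlus_of_not_inPlus i m hL hx, ?_⟩
    by_cases hy : inPlusSite i m y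
    · exact inPlus_reflSite_of_adj i m hL hadj hx hy
    · exact inPlus_of_not_inPlus i m hL hy

end AdjSplit
section MeasureInfra

instance sphereUniform_finite (N : ℕ) : IsFiniteMeasure (sphereUniform N) := by
  constructor
  rw [sphereUniform, Measure.smul_apply, smul_eq_mul]
  set c := (volume : Measure (EuclideanSpace ℝ (Fin N))).toSphere Set.univ with hc
  by_cases h0 : c = 0
  · rw [h0]; simp
  · have hfin : c ≠ ⊤ := (measure_lt_top _ _).ne
    rw [ENNReal.inv_mul_cancel h0 hfin]
    exact ENNReal.one_lt_top

variable {d L N : ℕ} [NeZero L] (i : Fin d) (m : ℕ)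

instance spinMeasure_finite : IsFiniteMeasure (spinMeasure d L N) := by
  unfold spinMeasure; infer_instance

/-- The reflection on configurations as a measurable equivalence. -/
noncomputable def reflCfgEquiv : SpinCfg d L N ≃ᵐ SpinCfg d L N :=
  MeasurableEquiv.piCongrLeft (fun _ => SpinSphere N) (reflEquiv (d := d) (L := L) i m)

lemma reflCfgEquiv_apply (φ : SpinCfg d L N) :
    (reflCfgEquiv (N := N) i m) φ = reflSiteCfg i m φ := by
  funext x
  have hx : (reflEquiv (d := d) (L := L) i m) (reflSite i m x) = x := reflSite_reflSite i m x
  calc (reflCfgEquiv (N := N) i m) φ x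
      = (reflCfgEquiv (N := N) i m) φ ((reflEquiv (d := d) (L := L) i m) (reflSite i m x)) := by
        rw [hx]
    _ = φ (reflSite i m x) := by
        rw [reflCfgEquiv, MeasurableEquiv.coe_piCongrLeft, Equiv.piCongrLeft_apply_apply]
    _ = reflSiteCfg i m φ x := rfl

lemma reflCfg_measurePreserving :
    MeasurePreserving (reflSiteCfg (N := N) i m) (spinMeasure d L N) (spinMeasure d L N) := by
  have h := measurePreserving_piCongrLeft (fun _ : TorusPt d L => sphereUniform N)
      (reflEquiv (d := d) (L := L) i m)
  have heq : reflSiteCfg (d := d) (L := L) (N := N) i m =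
      ⇑(MeasurableEquiv.piCongrLeft (fun _ => SpinSphere N) (reflEquiv (d := d) (L := L) i m)) := by
    funext φ
    exact (reflCfgEquiv_apply i m φ).symm
  rw [heq]
  exact h

lemma reflSiteCfg_reflSiteCfg (φ : SpinCfg d L N) :
    reflSiteCfg i m (reflSiteCfg i m φ) = φ := by
  funext x; simp [reflSiteCfg, reflSite_reflSite]

lemma hamiltonian_reflSiteCfg (φ : SpinCfg d L N) :
    hamiltonian (reflSiteCfg i m φ) = hamiltonian φ := by
  unfold hamiltonian
  congr 1
  refine Fintype.sum_equiv (reflEquiv (d := d) (L := L) i m) _ _ (fun x => ?_)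
  refine Fintype.sum_equiv (reflEquiv (d := d) (L := L) i m) _ _ (fun y => ?_)
  show (if torusAdj x y then
      ⟪(reflSiteCfg i m φ x : EuclideanSpace ℝ (Fin N)),
        (reflSiteCfg i m φ y : EuclideanSpace ℝ (Fin N))⟫ else 0) =
    if torusAdj (reflEquiv i m x) (reflEquiv i m y) then
      ⟪(φ (reflEquiv i m x) : EuclideanSpace ℝ (Fin N)),
        (φ (reflEquiv i m y) : EuclideanSpace ℝ (Fin N))⟫ else 0
  simp only [reflEquiv, Equiv.coe_fn_mk, reflSiteCfg]
  exact if_congr (torusAdj_reflSite_iff i m).symm rfl rfl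

end MeasureInfra
section MeasBound
variable {d L N : ℕ} [NeZero L] (i : Fin d) (m : ℕ)

lemma measurable_spinval (x : TorusPt d L) :
    Measurable fun φ : SpinCfg d L N => (φ x : EuclideanSpace ℝ (Fin N)) :=
  measurable_subtype_coe.comp (measurable_pi_apply x)

lemma measurable_inner_pair (x y : TorusPt d L) :
    Measurable fun φ : SpinCfg d L N =>
      ⟪(φ x : EuclideanSpace ℝ (Fin N)), (φ y : EuclideanSpace ℝ (Fin N))⟫ :=
  (measurable_spinval x).inner (measurable_spinval y)

lemma abs_inner_pair_le (x y : TorusPt d L) (φ : SpinCfg d L N) :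
    |⟪(φ x : EuclideanSpace ℝ (Fin N)), (φ y : EuclideanSpace ℝ (Fin N))⟫| ≤ 1 := by
  have h1 : ‖(φ x : EuclideanSpace ℝ (Fin N))‖ = 1 := by
    have := (φ x).2
    rwa [mem_sphere_zero_iff_norm] at this
  have h2 : ‖(φ y : EuclideanSpace ℝ (Fin N))‖ = 1 := by
    have := (φ y).2
    rwa [mem_sphere_zero_iff_norm] at this
  calc |⟪(φ x : EuclideanSpace ℝ (Fin N)), (φ y : EuclideanSpace ℝ (Fin N))⟫|
      ≤ ‖(φ x : EuclideanSpace ℝ (Fin N))‖ * ‖(φ y : EuclideanSpace ℝ (Fin N))‖ :=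
        abs_real_inner_le_norm _ _
    _ = 1 := by rw [h1, h2, mul_one]

lemma measurable_ite_prop {α : Type*} [MeasurableSpace α] (c : Prop) [Decidable c]
    {f : α → ℝ} (hf : Measurable f) : Measurable fun a => if c then f a else 0 := by
  by_cases hc : c
  · simpa [hc] using hf
  · simp [hc]

lemma measurable_hamiltonian : Measurable (hamiltonian (d := d) (L := L) (N := N)) := by
  unfold hamiltonian
  refine Measurable.const_mul ?_ _
  refine Finset.measurable_sum _ fun x _ => ?_
  refine Finset.measurable_sum _ fun y _ => ?_
  exact measurable_ite_prop _ (measurable_inner_pair x y)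

lemma abs_hamiltonian_le (φ : SpinCfg d L N) :
    |hamiltonian φ| ≤ (Fintype.card (TorusPt d L) : ℝ) ^ 2 / 2 := by
  unfold hamiltonian
  rw [abs_mul]
  have h1 : |(-(1 / 2) : ℝ)| = 1 / 2 := by norm_num
  rw [h1]
  have h2 : |∑ x : TorusPt d L, ∑ y : TorusPt d L,
      if torusAdj x y then
        ⟪(φ x : EuclideanSpace ℝ (Fin N)), (φ y : EuclideanSpace ℝ (Fin N))⟫ else 0|
      ≤ (Fintype.card (TorusPt d L) : ℝ) ^ 2 := by
    calc _ ≤ ∑ x : TorusPt d L, |∑ y : TorusPt d L,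
          if torusAdj x y then
            ⟪(φ x : EuclideanSpace ℝ (Fin N)), (φ y : EuclideanSpace ℝ (Fin N))⟫ else 0| :=
          Finset.abs_sum_le_sum_abs _ _
      _ ≤ ∑ _x : TorusPt d L, (Fintype.card (TorusPt d L) : ℝ) := by
          refine Finset.sum_le_sum fun x _ => ?_
          calc _ ≤ ∑ y : TorusPt d L, |if torusAdj x y then
                ⟪(φ x : EuclideanSpace ℝ (Fin N)), (φ y : EuclideanSpace ℝ (Fin N))⟫ else 0| :=
              Finset.abs_sum_le_sum_abs _ _
            _ ≤ ∑ _y : TorusPt d L, (1 : ℝ) := by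
                refine Finset.sum_le_sum fun y _ => ?_
                by_cases hadj : torusAdj x y
                · rw [if_pos hadj]; exact abs_inner_pair_le x y φ
                · rw [if_neg hadj]; simp
            _ = (Fintype.card (TorusPt d L) : ℝ) := by
                rw [Finset.sum_const, Finset.card_univ, nsmul_eq_mul, mul_one]
      _ = (Fintype.card (TorusPt d L) : ℝ) ^ 2 := by
          rw [Finset.sum_const, Finset.card_univ, nsmul_eq_mul, sq]
  linarith [h2]

lemma integrable_of_bdd {α : Type*} [MeasurableSpace α] {μ : Measure α} [IsFiniteMeasure μ]
    {h : α → ℝ} (hm : Measurable h) {C : ℝ} (hb : ∀ x, |h x| ≤ C) : Integrable h μ := by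
  refine (integrable_const C).mono' hm.aestronglyMeasurable (ae_of_all _ fun x => ?_)
  simpa [Real.norm_eq_abs] using hb x

end MeasBound
section HalfSum
variable {d L N : ℕ} [NeZero L] (i : Fin d) (m : ℕ)

/-- The edge term `⟪φ_x, φ_y⟫` if `x ~ y`, else `0`. -/
noncomputable def adjTerm (φ : SpinCfg d L N) (x y : TorusPt d L) : ℝ :=
  if torusAdj x y then
    ⟪(φ x : EuclideanSpace ℝ (Fin N)), (φ y : EuclideanSpace ℝ (Fin N))⟫ else 0

/-- The half-torus part of the interaction: edges inside `T⁺`, with edges inside the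
fixed-point set counted with weight `1/2`. -/
noncomputable def halfSum (φ : SpinCfg d L N) : ℝ :=
  (∑ x : TorusPt d L, ∑ y : TorusPt d L,
    if inPlusSite i m x ∧ inPlusSite i m y then adjTerm φ x y else 0)
  - (1 / 2) * ∑ x : TorusPt d L, ∑ y : TorusPt d L,
    if (inPlusSite i m x ∧ inPlusSite i m y) ∧
        (inPlusSite i m (reflSite i m x) ∧ inPlusSite i m (reflSite i m y)) then
      adjTerm φ x y else 0

lemma adjTerm_reflSiteCfg (φ : SpinCfg d L N) (x y : TorusPt d L) :
    adjTerm (reflSiteCfg i m φ) (reflSite i m x) (reflSite i m y) = adjTerm φ x y := by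
  unfold adjTerm reflSiteCfg
  rw [if_congr (torusAdj_reflSite_iff i m) rfl rfl, reflSite_reflSite, reflSite_reflSite]

lemma adjTerm_reflSiteCfg' (φ : SpinCfg d L N) (x y : TorusPt d L) :
    adjTerm (reflSiteCfg i m φ) x y = adjTerm φ (reflSite i m x) (reflSite i m y) := by
  unfold adjTerm reflSiteCfg
  rw [if_congr (torusAdj_reflSite_iff i m) rfl rfl]

lemma halfSum_reflSiteCfg (φ : SpinCfg d L N) :
    halfSum i m (reflSiteCfg i m φ) =
      (∑ x : TorusPt d L, ∑ y : TorusPt d L,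
        if inPlusSite i m (reflSite i m x) ∧ inPlusSite i m (reflSite i m y) then
          adjTerm φ x y else 0)
      - (1 / 2) * ∑ x : TorusPt d L, ∑ y : TorusPt d L,
        if (inPlusSite i m x ∧ inPlusSite i m y) ∧
            (inPlusSite i m (reflSite i m x) ∧ inPlusSite i m (reflSite i m y)) then
          adjTerm φ x y else 0 := by
  unfold halfSum
  congr 1
  · refine Fintype.sum_equiv (reflEquiv (d := d) (L := L) i m) _ _ (fun x => ?_)
    refine Fintype.sum_equiv (reflEquiv (d := d) (L := L) i m) _ _ (fun y => ?_)
    show (if inPlusSite i m x ∧ inPlusSite i m y then adjTerm (reflSiteCfg i m φ) x y else 0) =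
      if inPlusSite i m (reflSite i m (reflSite i m x)) ∧
          inPlusSite i m (reflSite i m (reflSite i m y)) then
        adjTerm φ (reflSite i m x) (reflSite i m y) else 0
    rw [reflSite_reflSite, reflSite_reflSite, adjTerm_reflSiteCfg']
  · congr 1
    refine Fintype.sum_equiv (reflEquiv (d := d) (L := L) i m) _ _ (fun x => ?_)
    refine Fintype.sum_equiv (reflEquiv (d := d) (L := L) i m) _ _ (fun y => ?_)
    show (if (inPlusSite i m x ∧ inPlusSite i m y) ∧
          (inPlusSite i m (reflSite i m x) ∧ inPlusSite i m (reflSite i m y)) then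
        adjTerm (reflSiteCfg i m φ) x y else 0) =
      if (inPlusSite i m (reflSite i m x) ∧ inPlusSite i m (reflSite i m y)) ∧
          (inPlusSite i m (reflSite i m (reflSite i m x)) ∧
            inPlusSite i m (reflSite i m (reflSite i m y))) then
        adjTerm φ (reflSite i m x) (reflSite i m y) else 0
    rw [reflSite_reflSite, reflSite_reflSite, adjTerm_reflSiteCfg']
    exact if_congr (and_comm) rfl rfl

lemma halfSum_add (hL : Even L) (φ : SpinCfg d L N) :
    halfSum i m φ + halfSum i m (reflSiteCfg i m φ) = -2 * hamiltonian φ := by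
  rw [halfSum_reflSiteCfg]
  unfold halfSum hamiltonian
  have key : ∀ x y : TorusPt d L,
      (if inPlusSite i m x ∧ inPlusSite i m y then adjTerm φ x y else 0)
      + (if inPlusSite i m (reflSite i m x) ∧ inPlusSite i m (reflSite i m y) then
          adjTerm φ x y else 0)
      - (if (inPlusSite i m x ∧ inPlusSite i m y) ∧
          (inPlusSite i m (reflSite i m x) ∧ inPlusSite i m (reflSite i m y)) then
          adjTerm φ x y else 0)
      = adjTerm φ x y := by
    intro x y
    by_cases hadj : torusAdj x y
    · have hsplit := adj_split i m hL hadj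
      by_cases hP : inPlusSite i m x ∧ inPlusSite i m y
      · by_cases hQ : inPlusSite i m (reflSite i m x) ∧ inPlusSite i m (reflSite i m y)
        · simp [hP, hQ]
        · simp [hP, hQ]
      · by_cases hQ : inPlusSite i m (reflSite i m x) ∧ inPlusSite i m (reflSite i m y)
        · simp [hP, hQ]
        · exact absurd hsplit (by simp [hP, hQ])
    · have h0 : adjTerm φ x y = 0 := by unfold adjTerm; rw [if_neg hadj]
      simp [h0]
  have sum_key : ∑ x : TorusPt d L, ∑ y : TorusPt d L,
      ((if inPlusSite i m x ∧ inPlusSite i m y then adjTerm φ x y else 0)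
      + (if inPlusSite i m (reflSite i m x) ∧ inPlusSite i m (reflSite i m y) then
          adjTerm φ x y else 0)
      - (if (inPlusSite i m x ∧ inPlusSite i m y) ∧
          (inPlusSite i m (reflSite i m x) ∧ inPlusSite i m (reflSite i m y)) then
          adjTerm φ x y else 0))
      = ∑ x : TorusPt d L, ∑ y : TorusPt d L, adjTerm φ x y := by
    exact Finset.sum_congr rfl fun x _ => Finset.sum_congr rfl fun y _ => key x y
  simp only [Finset.sum_sub_distrib, Finset.sum_add_distrib, ← Finset.mul_sum] at sum_key
  unfold adjTerm at sum_key ⊢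
  ring_nf
  ring_nf at sum_key
  linarith [sum_key]

end HalfSum
section HalfSumProps
variable {d L N : ℕ} [NeZero L] (i : Fin d) (m : ℕ)

lemma measurable_adjTerm (x y : TorusPt d L) :
    Measurable fun φ : SpinCfg d L N => adjTerm φ x y := by
  unfold adjTerm
  exact measurable_ite_prop _ (measurable_inner_pair x y)

lemma measurable_halfSum : Measurable (halfSum (d := d) (L := L) (N := N) i m) := by
  unfold halfSum
  refine Measurable.sub ?_ (Measurable.const_mul ?_ _) <;>
  · refine Finset.measurable_sum _ fun x _ => ?_
    refine Finset.measurable_sum _ fun y _ => ?_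
    exact measurable_ite_prop _ (measurable_adjTerm x y)

lemma abs_adjTerm_le (φ : SpinCfg d L N) (x y : TorusPt d L) : |adjTerm φ x y| ≤ 1 := by
  unfold adjTerm
  by_cases hadj : torusAdj x y
  · rw [if_pos hadj]; exact abs_inner_pair_le x y φ
  · rw [if_neg hadj]; simp

lemma abs_cond_double_sum_le (φ : SpinCfg d L N) (c : TorusPt d L → TorusPt d L → Prop)
    [∀ x y, Decidable (c x y)] :
    |∑ x : TorusPt d L, ∑ y : TorusPt d L, if c x y then adjTerm φ x y else 0|
      ≤ (Fintype.card (TorusPt d L) : ℝ) ^ 2 := by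
  calc _ ≤ ∑ x : TorusPt d L, |∑ y : TorusPt d L, if c x y then adjTerm φ x y else 0| :=
        Finset.abs_sum_le_sum_abs _ _
    _ ≤ ∑ _x : TorusPt d L, (Fintype.card (TorusPt d L) : ℝ) := by
        refine Finset.sum_le_sum fun x _ => ?_
        calc _ ≤ ∑ y : TorusPt d L, |if c x y then adjTerm φ x y else 0| :=
            Finset.abs_sum_le_sum_abs _ _
          _ ≤ ∑ _y : TorusPt d L, (1 : ℝ) := by
              refine Finset.sum_le_sum fun y _ => ?_
              by_cases hc : c x y
              · rw [if_pos hc]; exact abs_adjTerm_le φ x y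
              · rw [if_neg hc]; simp
          _ = (Fintype.card (TorusPt d L) : ℝ) := by
              rw [Finset.sum_const, Finset.card_univ, nsmul_eq_mul, mul_one]
    _ = (Fintype.card (TorusPt d L) : ℝ) ^ 2 := by
        rw [Finset.sum_const, Finset.card_univ, nsmul_eq_mul, sq]

lemma abs_halfSum_le (φ : SpinCfg d L N) :
    |halfSum i m φ| ≤ 2 * (Fintype.card (TorusPt d L) : ℝ) ^ 2 := by
  unfold halfSum
  have h1 := abs_cond_double_sum_le φ
    (fun x y => inPlusSite i m x ∧ inPlusSite i m y)
  have h2 := abs_cond_double_sum_le φ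
    (fun x y => (inPlusSite i m x ∧ inPlusSite i m y) ∧
      (inPlusSite i m (reflSite i m x) ∧ inPlusSite i m (reflSite i m y)))
  calc _ ≤ |∑ x : TorusPt d L, ∑ y : TorusPt d L,
        if inPlusSite i m x ∧ inPlusSite i m y then adjTerm φ x y else 0|
      + |(1 / 2 : ℝ) * ∑ x : TorusPt d L, ∑ y : TorusPt d L,
        if (inPlusSite i m x ∧ inPlusSite i m y) ∧
            (inPlusSite i m (reflSite i m x) ∧ inPlusSite i m (reflSite i m y)) then
          adjTerm φ x y else 0| := abs_sub _ _
    _ ≤ _ := by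
        rw [abs_mul]
        have : |(1 / 2 : ℝ)| = 1 / 2 := by norm_num
        rw [this]
        nlinarith [h1, h2, abs_nonneg (∑ x : TorusPt d L, ∑ y : TorusPt d L,
          if (inPlusSite i m x ∧ inPlusSite i m y) ∧
              (inPlusSite i m (reflSite i m x) ∧ inPlusSite i m (reflSite i m y)) then
            adjTerm φ x y else 0)]

lemma halfSum_plusDep (φ ψ : SpinCfg d L N) (h : ∀ x, inPlusSite i m x → φ x = ψ x) :
    halfSum i m φ = halfSum i m ψ := by
  unfold halfSum
  have key : ∀ (x y : TorusPt d L), inPlusSite i m x → inPlusSite i m y →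
      adjTerm φ x y = adjTerm ψ x y := by
    intro x y hx hy
    unfold adjTerm
    rw [h x hx, h y hy]
  congr 1
  · refine Finset.sum_congr rfl fun x _ => Finset.sum_congr rfl fun y _ => ?_
    by_cases hc : inPlusSite i m x ∧ inPlusSite i m y
    · rw [if_pos hc, if_pos hc, key x y hc.1 hc.2]
    · rw [if_neg hc, if_neg hc]
  · congr 1
    refine Finset.sum_congr rfl fun x _ => Finset.sum_congr rfl fun y _ => ?_
    by_cases hc : (inPlusSite i m x ∧ inPlusSite i m y) ∧
        (inPlusSite i m (reflSite i m x) ∧ inPlusSite i m (reflSite i m y))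
    · rw [if_pos hc, if_pos hc, key x y hc.1.1 hc.1.2]
    · rw [if_neg hc, if_neg hc]

end HalfSumProps
section Core
variable {d L N : ℕ} [NeZero L] (i : Fin d) (m : ℕ)

/-- Classification of torus sites into fixed plane / strict plus / complement of plus. -/
def sumEquiv : ({x : TorusPt d L // inPlusSite i m x ∧ inPlusSite i m (reflSite i m x)} ⊕
    ({x : TorusPt d L // inPlusSite i m x ∧ ¬ inPlusSite i m (reflSite i m x)} ⊕
      {x : TorusPt d L // ¬ inPlusSite i m x})) ≃ TorusPt d L where
  toFun := Sum.elim Subtype.val (Sum.elim Subtype.val Subtype.val)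
  invFun x :=
    if h1 : inPlusSite i m x then
      if h2 : inPlusSite i m (reflSite i m x) then Sum.inl ⟨x, h1, h2⟩
      else Sum.inr (Sum.inl ⟨x, h1, h2⟩)
    else Sum.inr (Sum.inr ⟨x, h1⟩)
  left_inv := by
    rintro (⟨x, h1, h2⟩ | ⟨x, h1, h2⟩ | ⟨x, h1⟩)
    · simp [h1, h2]
    · simp [h1, h2]
    · simp [h1]
  right_inv := by
    intro x
    by_cases h1 : inPlusSite i m x <;>
      by_cases h2 : inPlusSite i m (reflSite i m x) <;> simp [h1, h2]

lemma sumEquiv_symm_apply (x : TorusPt d L) :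
    (sumEquiv i m).symm x =
      if h1 : inPlusSite i m x then
        if h2 : inPlusSite i m (reflSite i m x) then Sum.inl ⟨x, h1, h2⟩
        else Sum.inr (Sum.inl ⟨x, h1, h2⟩)
      else Sum.inr (Sum.inr ⟨x, h1⟩) := rfl

/-- The reflection as a bijection between the strict plus part and the complement of plus. -/
def reflPM (hL : Even L) :
    {x : TorusPt d L // inPlusSite i m x ∧ ¬ inPlusSite i m (reflSite i m x)} ≃
      {x : TorusPt d L // ¬ inPlusSite i m x} where
  toFun a := ⟨reflSite i m (a : TorusPt d L), a.2.2⟩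
  invFun b := ⟨reflSite i m (b : TorusPt d L),
    ⟨inPlus_of_not_inPlus i m hL b.2, by rw [reflSite_reflSite]; exact b.2⟩⟩
  left_inv a := Subtype.ext (reflSite_reflSite i m (a : TorusPt d L))
  right_inv b := Subtype.ext (reflSite_reflSite i m (b : TorusPt d L))


/-- Sites on the reflection plane. -/
abbrev IotaR (d L : ℕ) [NeZero L] (i : Fin d) (m : ℕ) : Type :=
  {x : TorusPt d L // inPlusSite i m x ∧ inPlusSite i m (reflSite i m x)}

/-- Sites strictly in the plus half. -/
abbrev IotaP (d L : ℕ) [NeZero L] (i : Fin d) (m : ℕ) : Type :=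
  {x : TorusPt d L // inPlusSite i m x ∧ ¬ inPlusSite i m (reflSite i m x)}

/-- Sites outside the plus half. -/
abbrev IotaM (d L : ℕ) [NeZero L] (i : Fin d) (m : ℕ) : Type :=
  {x : TorusPt d L // ¬ inPlusSite i m x}

set_option synthInstance.maxHeartbeats 1000000 in
set_option maxHeartbeats 2000000 in
lemma core_positivity (hL : Even L) (hN : 1 ≤ N)
    (F : SpinCfg d L N → ℝ) (hFm : Measurable F) (C : ℝ) (hFb : ∀ φ, |F φ| ≤ C)
    (hFp : ∀ φ ψ : SpinCfg d L N, (∀ x, inPlusSite i m x → φ x = ψ x) → F φ = F ψ) :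
    0 ≤ ∫ φ, F φ * F (reflSiteCfg i m φ) ∂(spinMeasure d L N) := by
  classical
  -- a base point on the sphere
  have hsp : ∃ s : SpinSphere N, True := by
    refine ⟨⟨EuclideanSpace.single (⟨0, hN⟩ : Fin N) 1, ?_⟩, trivial⟩
    rw [mem_sphere_zero_iff_norm, EuclideanSpace.norm_single]
    norm_num
  obtain ⟨sp0, -⟩ := hsp
  set e := reflPM i m hL with he
  -- recombination map
  set Ψ : (IotaR d L i m → SpinSphere N) → (IotaP d L i m → SpinSphere N) → SpinCfg d L N := fun r p x =>
    if h1 : inPlusSite i m x then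
      if h2 : inPlusSite i m (reflSite i m x) then r ⟨x, h1, h2⟩ else p ⟨x, h1, h2⟩
    else sp0 with hΨ
  set G : (IotaR d L i m → SpinSphere N) → (IotaP d L i m → SpinSphere N) → ℝ := fun r p => F (Ψ r p) with hG
  -- the full measurable equivalence
  set E := sumEquiv (d := d) (L := L) i m with hE
  set T0 := MeasurableEquiv.piCongrLeft (fun _ : TorusPt d L => (SpinSphere N : Type)) E with hT0
  have hT0ap : ∀ (v : ∀ _ : IotaR d L i m ⊕ (IotaP d L i m ⊕ IotaM d L i m), SpinSphere N) (x : TorusPt d L),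
      T0 v x = v (E.symm x) := by
    intro v x
    conv_lhs => rw [← E.apply_symm_apply x]
    rw [hT0, MeasurableEquiv.coe_piCongrLeft, Equiv.piCongrLeft_apply_apply]
  have hMP0 : MeasurePreserving (⇑T0)
      (Measure.pi fun _ : IotaR d L i m ⊕ (IotaP d L i m ⊕ IotaM d L i m) => sphereUniform N) (spinMeasure d L N) :=
    measurePreserving_piCongrLeft (fun _ : TorusPt d L => sphereUniform N) E
  -- pointwise identification of the integrand
  have hptA : ∀ v : ∀ _ : IotaR d L i m ⊕ (IotaP d L i m ⊕ IotaM d L i m), SpinSphere N,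
      F (T0 v) = G (fun a => v (Sum.inl a)) (fun b => v (Sum.inr (Sum.inl b))) := by
    intro v
    refine hFp _ _ fun x h1 => ?_
    show T0 v x = Ψ (fun a => v (Sum.inl a)) (fun b => v (Sum.inr (Sum.inl b))) x
    rw [hT0ap]
    simp only [hΨ]
    rw [hE, sumEquiv_symm_apply]
    rw [dif_pos h1, dif_pos h1]
    by_cases h2 : inPlusSite i m (reflSite i m x)
    · rw [dif_pos h2, dif_pos h2]
    · rw [dif_neg h2, dif_neg h2]
  have hptB : ∀ v : ∀ _ : IotaR d L i m ⊕ (IotaP d L i m ⊕ IotaM d L i m), SpinSphere N,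
      F (reflSiteCfg i m (T0 v)) =
        G (fun a => v (Sum.inl a)) (fun b => v (Sum.inr (Sum.inr (e b)))) := by
    intro v
    refine hFp _ _ fun x h1 => ?_
    show T0 v (reflSite i m x) =
      Ψ (fun a => v (Sum.inl a)) (fun b => v (Sum.inr (Sum.inr (e b)))) x
    rw [hT0ap]
    by_cases h2 : inPlusSite i m (reflSite i m x)
    · have hfix : reflSite i m x = x := reflSite_eq_self i m hL h1 h2
      have h2' : inPlusSite i m (reflSite i m (reflSite i m x)) := by
        rw [reflSite_reflSite]; exact h1
      have hsymm : E.symm (reflSite i m x) = Sum.inl ⟨x, h1, h2⟩ := by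
        rw [hE, sumEquiv_symm_apply, dif_pos h2, dif_pos h2']
        exact congrArg Sum.inl (Subtype.ext hfix)
      rw [hsymm]
      simp only [hΨ]
      rw [dif_pos h1, dif_pos h2]
    · have hsymm : E.symm (reflSite i m x) =
          Sum.inr (Sum.inr ⟨reflSite i m x, h2⟩) := by
        rw [hE, sumEquiv_symm_apply, dif_neg h2]
      rw [hsymm]
      simp only [hΨ]
      rw [dif_pos h1, dif_neg h2]
      rfl
  -- the product decomposition
  set T1 := MeasurableEquiv.sumPiEquivProdPi (fun _ : IotaR d L i m ⊕ (IotaP d L i m ⊕ IotaM d L i m) => (SpinSphere N : Type))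
    with hT1
  set T2 := (MeasurableEquiv.refl (IotaR d L i m → SpinSphere N)).prodCongr
    (MeasurableEquiv.sumPiEquivProdPi (fun _ : IotaP d L i m ⊕ IotaM d L i m => (SpinSphere N : Type))) with hT2
  have hMP1 : MeasurePreserving (⇑T1) (Measure.pi fun _ : IotaR d L i m ⊕ (IotaP d L i m ⊕ IotaM d L i m) => sphereUniform N)
      ((Measure.pi fun _ : IotaR d L i m => sphereUniform N).prod (Measure.pi fun _ : IotaP d L i m ⊕ IotaM d L i m => sphereUniform N)) :=
    measurePreserving_sumPiEquivProdPi _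
  have hMP2 : MeasurePreserving (⇑T2)
      ((Measure.pi fun _ : IotaR d L i m => sphereUniform N).prod (Measure.pi fun _ : IotaP d L i m ⊕ IotaM d L i m => sphereUniform N))
      ((Measure.pi fun _ : IotaR d L i m => sphereUniform N).prod
        ((Measure.pi fun _ : IotaP d L i m => sphereUniform N).prod (Measure.pi fun _ : IotaM d L i m => sphereUniform N))) := by
    have h1 : MeasurePreserving (id : (IotaR d L i m → SpinSphere N) → (IotaR d L i m → SpinSphere N))
        (Measure.pi fun _ : IotaR d L i m => sphereUniform N) (Measure.pi fun _ : IotaR d L i m => sphereUniform N) := MeasurePreserving.id _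
    have h2 : MeasurePreserving
        (⇑(MeasurableEquiv.sumPiEquivProdPi (fun _ : IotaP d L i m ⊕ IotaM d L i m => (SpinSphere N : Type))))
        (Measure.pi fun _ : IotaP d L i m ⊕ IotaM d L i m => sphereUniform N)
        ((Measure.pi fun _ : IotaP d L i m => sphereUniform N).prod (Measure.pi fun _ : IotaM d L i m => sphereUniform N)) :=
      measurePreserving_sumPiEquivProdPi _
    exact h1.prod h2
  -- final integrand
  set Hfin : (IotaR d L i m → SpinSphere N) × ((IotaP d L i m → SpinSphere N) × (IotaM d L i m → SpinSphere N)) → ℝ := fun z =>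
    G z.1 z.2.1 * G z.1 (fun b => z.2.2 (e b)) with hHfin
  -- measurability of Ψ-composites
  have hΨmeas1 : Measurable fun z : (IotaR d L i m → SpinSphere N) ×
      ((IotaP d L i m → SpinSphere N) × (IotaM d L i m → SpinSphere N)) => Ψ z.1 z.2.1 := by
    refine measurable_pi_lambda _ fun x => ?_
    simp only [hΨ]
    by_cases h1 : inPlusSite i m x
    · by_cases h2 : inPlusSite i m (reflSite i m x)
      · simp only [dif_pos h1, dif_pos h2]
        exact (measurable_pi_apply _).comp measurable_fst
      · simp only [dif_pos h1, dif_neg h2]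
        exact (measurable_pi_apply _).comp (measurable_fst.comp measurable_snd)
    · simp only [dif_neg h1]
      exact measurable_const
  have hΨmeas2 : Measurable fun z : (IotaR d L i m → SpinSphere N) ×
      ((IotaP d L i m → SpinSphere N) × (IotaM d L i m → SpinSphere N)) => Ψ z.1 (fun b => z.2.2 (e b)) := by
    refine measurable_pi_lambda _ fun x => ?_
    simp only [hΨ]
    by_cases h1 : inPlusSite i m x
    · by_cases h2 : inPlusSite i m (reflSite i m x)
      · simp only [dif_pos h1, dif_pos h2]
        exact (measurable_pi_apply _).comp measurable_fst
      · simp only [dif_pos h1, dif_neg h2]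
        exact (measurable_pi_apply _).comp (measurable_snd.comp measurable_snd)
    · simp only [dif_neg h1]
      exact measurable_const
  have hHmeas : Measurable Hfin := (hFm.comp hΨmeas1).mul (hFm.comp hΨmeas2)
  have hHbdd : ∀ z, |Hfin z| ≤ C * C := by
    intro z
    rw [hHfin, abs_mul]
    have h1 := hFb (Ψ z.1 z.2.1)
    have h2 := hFb (Ψ z.1 (fun b => z.2.2 (e b)))
    exact mul_le_mul h1 h2 (abs_nonneg _) ((abs_nonneg _).trans h1)
  haveI hfina : IsFiniteMeasure (Measure.pi fun _ : IotaP d L i m => sphereUniform N) :=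
    inferInstance
  haveI hfinb : IsFiniteMeasure (Measure.pi fun _ : IotaM d L i m => sphereUniform N) :=
    inferInstance
  haveI hfinc : IsFiniteMeasure (Measure.pi fun _ : IotaR d L i m => sphereUniform N) :=
    inferInstance
  have hHint : Integrable Hfin
      ((Measure.pi fun _ : IotaR d L i m => sphereUniform N).prod
        ((Measure.pi fun _ : IotaP d L i m => sphereUniform N).prod (Measure.pi fun _ : IotaM d L i m => sphereUniform N))) :=
    integrable_of_bdd hHmeas hHbdd
  -- chain of integral identities
  have step1 : ∫ φ, F φ * F (reflSiteCfg i m φ) ∂(spinMeasure d L N)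
      = ∫ v, F (T0 v) * F (reflSiteCfg i m (T0 v))
          ∂(Measure.pi fun _ : IotaR d L i m ⊕ (IotaP d L i m ⊕ IotaM d L i m) => sphereUniform N) :=
    (hMP0.integral_comp' (fun φ => F φ * F (reflSiteCfg i m φ))).symm
  have step2 : ∫ v, F (T0 v) * F (reflSiteCfg i m (T0 v))
          ∂(Measure.pi fun _ : IotaR d L i m ⊕ (IotaP d L i m ⊕ IotaM d L i m) => sphereUniform N)
      = ∫ v, Hfin (T2 (T1 v)) ∂(Measure.pi fun _ : IotaR d L i m ⊕ (IotaP d L i m ⊕ IotaM d L i m) => sphereUniform N) := by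
    refine integral_congr_ae (ae_of_all _ fun v => ?_)
    show F (T0 v) * F (reflSiteCfg i m (T0 v)) = Hfin (T2 (T1 v))
    rw [hptA v, hptB v]
    rfl
  have step3 : ∫ v, Hfin (T2 (T1 v)) ∂(Measure.pi fun _ : IotaR d L i m ⊕ (IotaP d L i m ⊕ IotaM d L i m) => sphereUniform N)
      = ∫ z, Hfin z ∂((Measure.pi fun _ : IotaR d L i m => sphereUniform N).prod
          ((Measure.pi fun _ : IotaP d L i m => sphereUniform N).prod (Measure.pi fun _ : IotaM d L i m => sphereUniform N))) :=
    (hMP2.comp hMP1).integral_comp' (f := T1.trans T2) Hfin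
  have step4 : ∫ z, Hfin z ∂((Measure.pi fun _ : IotaR d L i m => sphereUniform N).prod
          ((Measure.pi fun _ : IotaP d L i m => sphereUniform N).prod (Measure.pi fun _ : IotaM d L i m => sphereUniform N)))
      = ∫ r, (∫ p, G r p ∂(Measure.pi fun _ : IotaP d L i m => sphereUniform N)) ^ 2
          ∂(Measure.pi fun _ : IotaR d L i m => sphereUniform N) := by
    rw [integral_prod _ hHint]
    refine integral_congr_ae (ae_of_all _ fun r => ?_)
    show ∫ w : (IotaP d L i m → SpinSphere N) × (IotaM d L i m → SpinSphere N), Hfin (r, w)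
          ∂((Measure.pi fun _ : IotaP d L i m => sphereUniform N).prod (Measure.pi fun _ : IotaM d L i m => sphereUniform N))
        = (∫ p, G r p ∂(Measure.pi fun _ : IotaP d L i m => sphereUniform N)) ^ 2
    have hmul : ∫ w : (IotaP d L i m → SpinSphere N) × (IotaM d L i m → SpinSphere N), Hfin (r, w)
          ∂((Measure.pi fun _ : IotaP d L i m => sphereUniform N).prod (Measure.pi fun _ : IotaM d L i m => sphereUniform N))
        = (∫ p, G r p ∂(Measure.pi fun _ : IotaP d L i m => sphereUniform N))
          * ∫ q, (fun q' : IotaM d L i m → SpinSphere N => G r (fun b => q' (e b))) q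
              ∂(Measure.pi fun _ : IotaM d L i m => sphereUniform N) :=
      integral_prod_mul (fun p => G r p) (fun q' : IotaM d L i m → SpinSphere N => G r (fun b => q' (e b)))
    rw [hmul]
    have hchg : ∫ q, (fun q' : IotaM d L i m → SpinSphere N => G r (fun b => q' (e b))) q
          ∂(Measure.pi fun _ : IotaM d L i m => sphereUniform N)
        = ∫ p, G r p ∂(Measure.pi fun _ : IotaP d L i m => sphereUniform N) := by
      have hMPe : MeasurePreserving
          (⇑(MeasurableEquiv.piCongrLeft (fun _ : IotaM d L i m => (SpinSphere N : Type)) e))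
          (Measure.pi fun _ : IotaP d L i m => sphereUniform N) (Measure.pi fun _ : IotaM d L i m => sphereUniform N) :=
        measurePreserving_piCongrLeft (fun _ : IotaM d L i m => sphereUniform N) e
      rw [← hMPe.integral_comp' (fun q' : IotaM d L i m → SpinSphere N => G r (fun b => q' (e b)))]
      refine integral_congr_ae (ae_of_all _ fun p => ?_)
      have harg : (fun b => (MeasurableEquiv.piCongrLeft
          (fun _ : IotaM d L i m => (SpinSphere N : Type)) e) p (e b)) = p := by
        funext b
        rw [MeasurableEquiv.coe_piCongrLeft, Equiv.piCongrLeft_apply_apply]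
      show G r (fun b => (MeasurableEquiv.piCongrLeft
          (fun _ : IotaM d L i m => (SpinSphere N : Type)) e) p (e b)) = G r p
      rw [harg]
    rw [hchg, sq]
  rw [step1, step2, step3, step4]
  exact integral_nonneg fun r => sq_nonneg _

end Core
section Final
variable {d L N : ℕ} [NeZero L] (i : Fin d) (m : ℕ)

lemma integral_reflCfg (h : SpinCfg d L N → ℝ) :
    ∫ φ, h (reflSiteCfg i m φ) ∂(spinMeasure d L N) = ∫ φ, h φ ∂(spinMeasure d L N) := by
  have hMP : MeasurePreserving
      (⇑(MeasurableEquiv.piCongrLeft (fun _ : TorusPt d L => (SpinSphere N : Type))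
        (reflEquiv (d := d) (L := L) i m)))
      (spinMeasure d L N) (spinMeasure d L N) :=
    measurePreserving_piCongrLeft (fun _ : TorusPt d L => sphereUniform N) _
  rw [← hMP.integral_comp' h]
  refine integral_congr_ae (ae_of_all _ fun φ => ?_)
  show h (reflSiteCfg i m φ) =
    h ((MeasurableEquiv.piCongrLeft (fun _ : TorusPt d L => (SpinSphere N : Type))
      (reflEquiv (d := d) (L := L) i m)) φ)
  congr 1
  exact (reflCfgEquiv_apply i m φ).symm

lemma numerator_symm (β : ℝ) (f g : SpinCfg d L N → ℝ) :
    ∫ φ, f φ * g (reflSiteCfg i m φ) * Real.exp (-β * hamiltonian φ) ∂(spinMeasure d L N)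
      = ∫ φ, g φ * f (reflSiteCfg i m φ) * Real.exp (-β * hamiltonian φ)
          ∂(spinMeasure d L N) := by
  rw [← integral_reflCfg i m
    (fun φ => f φ * g (reflSiteCfg i m φ) * Real.exp (-β * hamiltonian φ))]
  refine integral_congr_ae (ae_of_all _ fun φ => ?_)
  show f (reflSiteCfg i m φ) * g (reflSiteCfg i m (reflSiteCfg i m φ))
      * Real.exp (-β * hamiltonian (reflSiteCfg i m φ))
    = g φ * f (reflSiteCfg i m φ) * Real.exp (-β * hamiltonian φ)
  rw [reflSiteCfg_reflSiteCfg, hamiltonian_reflSiteCfg]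
  ring

/-- The half-torus Boltzmann weight. -/
noncomputable def spinWeight (β : ℝ) (φ : SpinCfg d L N) : ℝ :=
  Real.exp ((β / 2) * halfSum i m φ)

lemma exp_ham_eq (hL : Even L) (β : ℝ) (φ : SpinCfg d L N) :
    Real.exp (-β * hamiltonian φ) =
      spinWeight i m β φ * spinWeight i m β (reflSiteCfg i m φ) := by
  unfold spinWeight
  rw [← Real.exp_add]
  congr 1
  have h := halfSum_add i m hL φ
  linear_combination (-(β / 2)) * h

lemma spinWeight_measurable (β : ℝ) :
    Measurable (spinWeight (d := d) (L := L) (N := N) i m β) :=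
  Real.measurable_exp.comp ((measurable_halfSum i m).const_mul (β / 2))

lemma spinWeight_abs_le (β : ℝ) (φ : SpinCfg d L N) :
    |spinWeight i m β φ| ≤
      Real.exp (|β / 2| * (2 * (Fintype.card (TorusPt d L) : ℝ) ^ 2)) := by
  unfold spinWeight
  rw [abs_of_pos (Real.exp_pos _)]
  refine Real.exp_le_exp.mpr ?_
  calc (β / 2) * halfSum i m φ ≤ |(β / 2) * halfSum i m φ| := le_abs_self _
    _ = |β / 2| * |halfSum i m φ| := abs_mul _ _
    _ ≤ |β / 2| * (2 * (Fintype.card (TorusPt d L) : ℝ) ^ 2) :=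
        mul_le_mul_of_nonneg_left (abs_halfSum_le i m φ) (abs_nonneg _)

lemma spinWeight_plusDep (β : ℝ) (φ ψ : SpinCfg d L N)
    (h : ∀ x, inPlusSite i m x → φ x = ψ x) :
    spinWeight i m β φ = spinWeight i m β ψ := by
  unfold spinWeight
  rw [halfSum_plusDep i m φ ψ h]

lemma exp_ham_abs_le (β : ℝ) (φ : SpinCfg d L N) :
    |Real.exp (-β * hamiltonian φ)| ≤
      Real.exp (|β| * ((Fintype.card (TorusPt d L) : ℝ) ^ 2 / 2)) := by
  rw [abs_of_pos (Real.exp_pos _)]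
  refine Real.exp_le_exp.mpr ?_
  calc -β * hamiltonian φ ≤ |(-β) * hamiltonian φ| := le_abs_self _
    _ = |β| * |hamiltonian φ| := by rw [abs_mul, abs_neg]
    _ ≤ |β| * ((Fintype.card (TorusPt d L) : ℝ) ^ 2 / 2) :=
        mul_le_mul_of_nonneg_left (abs_hamiltonian_le φ) (abs_nonneg _)

lemma measurable_exp_ham (β : ℝ) :
    Measurable fun φ : SpinCfg d L N => Real.exp (-β * hamiltonian φ) :=
  Real.measurable_exp.comp (measurable_hamiltonian.const_mul (-β))

lemma integrable_pair (β : ℝ) (f g : SpinCfg d L N → ℝ)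
    (hf : Measurable f) (hg : Measurable g) (Cf Cg : ℝ)
    (hbf : ∀ φ, |f φ| ≤ Cf) (hbg : ∀ φ, |g φ| ≤ Cg) :
    Integrable (fun φ => f φ * g (reflSiteCfg i m φ) * Real.exp (-β * hamiltonian φ))
      (spinMeasure d L N) := by
  have hgm : Measurable fun φ : SpinCfg d L N => g (reflSiteCfg i m φ) :=
    hg.comp (reflCfg_measurePreserving i m).measurable
  refine integrable_of_bdd ((hf.mul hgm).mul (measurable_exp_ham β))
    (C := Cf * Cg * Real.exp (|β| * ((Fintype.card (TorusPt d L) : ℝ) ^ 2 / 2))) fun φ => ?_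
  have h1 := hbf φ
  have h2 := hbg (reflSiteCfg i m φ)
  have h3 := exp_ham_abs_le (d := d) (L := L) (N := N) β φ
  have e1 : |f φ * g (reflSiteCfg i m φ) * Real.exp (-β * hamiltonian φ)|
      = |f φ| * |g (reflSiteCfg i m φ)| * |Real.exp (-β * hamiltonian φ)| := by
    rw [abs_mul, abs_mul]
  rw [e1]
  have hCf : (0 : ℝ) ≤ Cf := (abs_nonneg _).trans h1
  have hCg : (0 : ℝ) ≤ Cg := (abs_nonneg _).trans h2
  refine mul_le_mul ?_ h3 (abs_nonneg _) (by positivity)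
  exact mul_le_mul h1 h2 (abs_nonneg _) hCf

lemma numerator_nonneg (hL : Even L) (hN : 1 ≤ N) (β : ℝ) (f : SpinCfg d L N → ℝ)
    (hm : Measurable f) (C : ℝ) (hb : ∀ φ, |f φ| ≤ C)
    (hp : ∀ φ ψ : SpinCfg d L N, (∀ x, inPlusSite i m x → φ x = ψ x) → f φ = f ψ) :
    0 ≤ ∫ φ, f φ * f (reflSiteCfg i m φ) * Real.exp (-β * hamiltonian φ)
        ∂(spinMeasure d L N) := by
  set WB := Real.exp (|β / 2| * (2 * (Fintype.card (TorusPt d L) : ℝ) ^ 2)) with hWB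
  have hC0 : (0 : ℝ) ≤ C := by
    have hsp : ∃ s : SpinSphere N, True := by
      refine ⟨⟨EuclideanSpace.single (⟨0, hN⟩ : Fin N) 1, ?_⟩, trivial⟩
      rw [mem_sphere_zero_iff_norm, EuclideanSpace.norm_single]
      norm_num
    obtain ⟨s0, -⟩ := hsp
    exact (abs_nonneg _).trans (hb fun _ => s0)
  have hcore := core_positivity i m hL hN (fun φ => f φ * spinWeight i m β φ)
    (hm.mul (spinWeight_measurable i m β)) (C * WB)
    (fun φ => by
      rw [abs_mul]
      exact mul_le_mul (hb φ) (spinWeight_abs_le i m β φ) (abs_nonneg _) hC0)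
    (fun φ ψ h => by
      show f φ * spinWeight i m β φ = f ψ * spinWeight i m β ψ
      rw [hp φ ψ h, spinWeight_plusDep i m β φ ψ h])
  calc (0 : ℝ) ≤ ∫ φ, (fun φ => f φ * spinWeight i m β φ) φ
        * (fun φ => f φ * spinWeight i m β φ) (reflSiteCfg i m φ) ∂(spinMeasure d L N) :=
      hcore
    _ = ∫ φ, f φ * f (reflSiteCfg i m φ) * Real.exp (-β * hamiltonian φ)
        ∂(spinMeasure d L N) := by
      refine integral_congr_ae (ae_of_all _ fun φ => ?_)
      show f φ * spinWeight i m β φ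
          * (f (reflSiteCfg i m φ) * spinWeight i m β (reflSiteCfg i m φ))
        = f φ * f (reflSiteCfg i m φ) * Real.exp (-β * hamiltonian φ)
      rw [exp_ham_eq i m hL β φ]
      ring

end Final

/-- **Reflection positivity through sites for the spin O(N) model.**
For the reflection `Θ` through sites in a plane orthogonal to `e_i` and bounded measurable
functions `f, g` depending only on the spins in `T_L^+`:
(1) `⟨f·Θg⟩ = ⟨g·Θf⟩`; (2) `⟨f·Θf⟩ ≥ 0`; (3) `⟨f·Θg⟩ ≤ ⟨f·Θf⟩^{1/2} ⟨g·Θg⟩^{1/2}`. -/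
theorem spin_site_reflection_positivity
    (d L N : ℕ) [NeZero L] (hd : 2 ≤ d) (hL : Even L) (hN : 1 ≤ N)
    (β : ℝ) (hβ : 0 ≤ β) (i : Fin d) (m : ℕ) (hm : m < L)
    (f g : SpinCfg d L N → ℝ)
    (hfmeas : Measurable f) (hgmeas : Measurable g)
    (hfbdd : ∃ C : ℝ, ∀ φ, |f φ| ≤ C) (hgbdd : ∃ C : ℝ, ∀ φ, |g φ| ≤ C)
    (hfplus : ∀ φ ψ : SpinCfg d L N, (∀ x, inPlusSite i m x → φ x = ψ x) → f φ = f ψ)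
    (hgplus : ∀ φ ψ : SpinCfg d L N, (∀ x, inPlusSite i m x → φ x = ψ x) → g φ = g ψ) :
    gibbsExp d L N β (fun φ => f φ * g (reflSiteCfg i m φ)) =
        gibbsExp d L N β (fun φ => g φ * f (reflSiteCfg i m φ)) ∧
      0 ≤ gibbsExp d L N β (fun φ => f φ * f (reflSiteCfg i m φ)) ∧
      gibbsExp d L N β (fun φ => f φ * g (reflSiteCfg i m φ)) ≤
        Real.sqrt (gibbsExp d L N β (fun φ => f φ * f (reflSiteCfg i m φ))) *
          Real.sqrt (gibbsExp d L N β (fun φ => g φ * g (reflSiteCfg i m φ))) := by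
  classical
  obtain ⟨Cf, hCf⟩ := hfbdd
  obtain ⟨Cg, hCg⟩ := hgbdd
  set Z := ∫ φ, Real.exp (-β * hamiltonian φ) ∂(spinMeasure d L N) with hZ
  have hZinv : 0 ≤ Z⁻¹ :=
    inv_nonneg.mpr (integral_nonneg fun φ => (Real.exp_pos _).le)
  set Iff' := ∫ φ, f φ * f (reflSiteCfg i m φ) * Real.exp (-β * hamiltonian φ)
    ∂(spinMeasure d L N) with hIff
  set Ifg := ∫ φ, f φ * g (reflSiteCfg i m φ) * Real.exp (-β * hamiltonian φ)
    ∂(spinMeasure d L N) with hIfg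
  set Igf := ∫ φ, g φ * f (reflSiteCfg i m φ) * Real.exp (-β * hamiltonian φ)
    ∂(spinMeasure d L N) with hIgf
  set Igg := ∫ φ, g φ * g (reflSiteCfg i m φ) * Real.exp (-β * hamiltonian φ)
    ∂(spinMeasure d L N) with hIgg
  have hgfg : gibbsExp d L N β (fun φ => f φ * g (reflSiteCfg i m φ)) = Z⁻¹ * Ifg := rfl
  have hggf : gibbsExp d L N β (fun φ => g φ * f (reflSiteCfg i m φ)) = Z⁻¹ * Igf := rfl
  have hgff : gibbsExp d L N β (fun φ => f φ * f (reflSiteCfg i m φ)) = Z⁻¹ * Iff' := rfl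
  have hggg : gibbsExp d L N β (fun φ => g φ * g (reflSiteCfg i m φ)) = Z⁻¹ * Igg := rfl
  have hsym : Ifg = Igf := numerator_symm i m β f g
  have hAnum : 0 ≤ Iff' := numerator_nonneg i m hL hN β f hfmeas Cf hCf hfplus
  have hCnum : 0 ≤ Igg := numerator_nonneg i m hL hN β g hgmeas Cg hCg hgplus
  have hA : 0 ≤ Z⁻¹ * Iff' := mul_nonneg hZinv hAnum
  have hC : 0 ≤ Z⁻¹ * Igg := mul_nonneg hZinv hCnum
  -- integrability of the four numerators
  have hint_ff := integrable_pair i m β f f hfmeas hfmeas Cf Cf hCf hCf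
  have hint_fg := integrable_pair i m β f g hfmeas hgmeas Cf Cg hCf hCg
  have hint_gf := integrable_pair i m β g f hgmeas hfmeas Cg Cf hCg hCf
  have hint_gg := integrable_pair i m β g g hgmeas hgmeas Cg Cg hCg hCg
  -- the quadratic form is nonnegative
  have hquad : ∀ t : ℝ, 0 ≤ (Z⁻¹ * Iff') * (t * t) + (Z⁻¹ * (Ifg + Igf)) * t
      + Z⁻¹ * Igg := by
    intro t
    have hbddh : ∀ φ, |t * f φ + g φ| ≤ |t| * Cf + Cg := fun φ => by
      calc |t * f φ + g φ| ≤ |t * f φ| + |g φ| := abs_add_le _ _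
        _ = |t| * |f φ| + |g φ| := by rw [abs_mul]
        _ ≤ |t| * Cf + Cg :=
            add_le_add (mul_le_mul_of_nonneg_left (hCf φ) (abs_nonneg t)) (hCg φ)
    have hmh : Measurable fun φ : SpinCfg d L N => t * f φ + g φ :=
      (hfmeas.const_mul t).add hgmeas
    have hplh : ∀ φ ψ : SpinCfg d L N, (∀ x, inPlusSite i m x → φ x = ψ x) →
        t * f φ + g φ = t * f ψ + g ψ := fun φ ψ h => by
      rw [hfplus φ ψ h, hgplus φ ψ h]
    have h0 := numerator_nonneg i m hL hN β (fun φ => t * f φ + g φ) hmh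
      (|t| * Cf + Cg) hbddh hplh
    have h0' : 0 ≤ ∫ φ, (t * f φ + g φ)
        * (t * f (reflSiteCfg i m φ) + g (reflSiteCfg i m φ))
        * Real.exp (-β * hamiltonian φ) ∂(spinMeasure d L N) := h0
    have hexp : ∫ φ, (t * f φ + g φ)
        * (t * f (reflSiteCfg i m φ) + g (reflSiteCfg i m φ))
        * Real.exp (-β * hamiltonian φ) ∂(spinMeasure d L N)
        = (t * t) * Iff' + (t * Ifg + (t * Igf + Igg)) := by
      have hptw : ∀ φ : SpinCfg d L N, (t * f φ + g φ)
          * (t * f (reflSiteCfg i m φ) + g (reflSiteCfg i m φ))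
          * Real.exp (-β * hamiltonian φ)
          = (t * t) * (f φ * f (reflSiteCfg i m φ) * Real.exp (-β * hamiltonian φ))
            + (t * (f φ * g (reflSiteCfg i m φ) * Real.exp (-β * hamiltonian φ))
              + (t * (g φ * f (reflSiteCfg i m φ) * Real.exp (-β * hamiltonian φ))
                + g φ * g (reflSiteCfg i m φ) * Real.exp (-β * hamiltonian φ))) :=
        fun φ => by ring
      calc ∫ φ, (t * f φ + g φ)
            * (t * f (reflSiteCfg i m φ) + g (reflSiteCfg i m φ))
            * Real.exp (-β * hamiltonian φ) ∂(spinMeasure d L N)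
          = ∫ φ, ((t * t) * (f φ * f (reflSiteCfg i m φ) * Real.exp (-β * hamiltonian φ))
            + (t * (f φ * g (reflSiteCfg i m φ) * Real.exp (-β * hamiltonian φ))
              + (t * (g φ * f (reflSiteCfg i m φ) * Real.exp (-β * hamiltonian φ))
                + g φ * g (reflSiteCfg i m φ) * Real.exp (-β * hamiltonian φ))))
            ∂(spinMeasure d L N) :=
          integral_congr_ae (ae_of_all _ fun φ => hptw φ)
        _ = (t * t) * Iff' + (t * Ifg + (t * Igf + Igg)) := by
          have hiA : Integrable (fun φ => (t * t)
              * (f φ * f (reflSiteCfg i m φ) * Real.exp (-β * hamiltonian φ)))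
              (spinMeasure d L N) := hint_ff.const_mul _
          have hiB : Integrable (fun φ => t
              * (f φ * g (reflSiteCfg i m φ) * Real.exp (-β * hamiltonian φ)))
              (spinMeasure d L N) := hint_fg.const_mul _
          have hiC : Integrable (fun φ => t
              * (g φ * f (reflSiteCfg i m φ) * Real.exp (-β * hamiltonian φ)))
              (spinMeasure d L N) := hint_gf.const_mul _
          have hiD : Integrable (fun φ =>
              g φ * g (reflSiteCfg i m φ) * Real.exp (-β * hamiltonian φ))
              (spinMeasure d L N) := hint_gg
          have hiCD : Integrable (fun φ => t
              * (g φ * f (reflSiteCfg i m φ) * Real.exp (-β * hamiltonian φ))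
              + g φ * g (reflSiteCfg i m φ) * Real.exp (-β * hamiltonian φ))
              (spinMeasure d L N) := hiC.add hiD
          have hiBCD : Integrable (fun φ => t
              * (f φ * g (reflSiteCfg i m φ) * Real.exp (-β * hamiltonian φ))
              + (t * (g φ * f (reflSiteCfg i m φ) * Real.exp (-β * hamiltonian φ))
                + g φ * g (reflSiteCfg i m φ) * Real.exp (-β * hamiltonian φ)))
              (spinMeasure d L N) := hiB.add hiCD
          rw [integral_add hiA hiBCD, integral_add hiB hiCD, integral_add hiC hiD,
            integral_const_mul, integral_const_mul, integral_const_mul]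
    rw [hexp] at h0'
    have hring : (Z⁻¹ * Iff') * (t * t) + (Z⁻¹ * (Ifg + Igf)) * t + Z⁻¹ * Igg
        = Z⁻¹ * ((t * t) * Iff' + (t * Ifg + (t * Igf + Igg))) := by ring
    rw [hring]
    exact mul_nonneg hZinv h0'
  have hdisc := discrim_le_zero hquad
  rw [discrim] at hdisc
  have hB2 : (Z⁻¹ * Ifg) ^ 2 ≤ (Z⁻¹ * Iff') * (Z⁻¹ * Igg) := by
    rw [← hsym] at hdisc
    nlinarith [hdisc]
  have hfinal : Z⁻¹ * Ifg ≤ Real.sqrt (Z⁻¹ * Iff') * Real.sqrt (Z⁻¹ * Igg) := by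
    calc Z⁻¹ * Ifg ≤ |Z⁻¹ * Ifg| := le_abs_self _
      _ = Real.sqrt ((Z⁻¹ * Ifg) ^ 2) := (Real.sqrt_sq_eq_abs _).symm
      _ ≤ Real.sqrt ((Z⁻¹ * Iff') * (Z⁻¹ * Igg)) := Real.sqrt_le_sqrt hB2
      _ = Real.sqrt (Z⁻¹ * Iff') * Real.sqrt (Z⁻¹ * Igg) := Real.sqrt_mul hA _
  refine ⟨?_, ?_, ?_⟩
  · rw [hgfg, hggf, hsym]
  · rw [hgff]; exact hA
  · rw [hgfg, hgff, hggg]; exact hfinal
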